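/- Let Σ be a signed graph on n vertices switching equivalent to a net-regular signed graph Σ' with net-degree ϱ, and let μ ∉ {0,1,−1,ϱ} be an eigenvalue of Σ with multiplicity k. If t = n − k ≥ 2, then n ≤ C(t+2,3) − 1. -/

import Mathlib

open Matrix Finset

theorem sgn_core {n t : ℕ} (M : Matrix (Fin n) (Fin n) ℝ)
    (hM : M.IsSymm) (μ a : ℝ)
    (hμ0 : μ ≠ 0) (hμ1 : μ ≠ 1) (hμm1 : μ ≠ -1) (ha : a ≠ 0)
    (hdiagM : ∀ v, M v v = -μ)
    (hoff : ∀ u v, u ≠ v → M u v = 0 ∨ M u v = 1 ∨ M u v = -1)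
    (hrow : ∀ u, ∑ v, M u v = a)
    (hrank : Module.finrank ℝ (LinearMap.range M.mulVecLin) = t)
    (ht2 : 2 ≤ t) :
    n + 1 ≤ (t + 2).choose 3 := by
  have hn : t ≤ n := by
    rw [← hrank]
    exact le_trans (Submodule.finrank_le _) (by simp)
  have hn2 : 2 ≤ n := le_trans ht2 hn
  have hsym : ∀ u v, M v u = M u v := by
    intro u v
    conv_rhs => rw [← hM]
    rfl
  have hcol : ∀ v, ∑ u, M u v = a := by
    intro v
    calc ∑ u, M u v = ∑ u, M v u := by
          exact Finset.sum_congr rfl fun u _ => (hsym v u)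
      _ = a := hrow v
  set R : Submodule ℝ (Fin n → ℝ) := LinearMap.range M.mulVecLin with hR
  -- the all-ones vector and the columns of M are in R
  set one : Fin n → ℝ := fun _ => (1:ℝ) with hone
  set col : Fin n → Fin n → ℝ := fun v u => M u v with hcolv
  have hMone : M.mulVec one = fun _ => a := by
    funext u
    simp only [Matrix.mulVec, dotProduct, hone, mul_one]
    exact hrow u
  have memR_one : one ∈ R := by
    refine ⟨a⁻¹ • one, ?_⟩
    rw [Matrix.mulVecLin_apply, Matrix.mulVec_smul, hMone]
    funext u
    simp [hone, inv_mul_cancel₀ ha]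
  have memR_col : ∀ v, col v ∈ R := by
    intro v
    refine ⟨Pi.single v 1, ?_⟩
    rw [Matrix.mulVecLin_apply]
    funext u
    rw [Matrix.mulVec_single]
    simp [hcolv]
  have hμ3 : μ - μ^3 ≠ 0 := by
    have : μ - μ^3 = μ * (1 - μ) * (1 + μ) := by ring
    rw [this]
    refine mul_ne_zero (mul_ne_zero hμ0 ?_) ?_
    · exact sub_ne_zero.mpr (Ne.symm hμ1)
    · intro h
      apply hμm1
      linarith
  -- basis of R
  haveI : FiniteDimensional ℝ R := inferInstance
  let bR : Module.Basis (Fin t) ℝ R := (Module.finBasis ℝ R).reindex (finCongr (by rw [hrank]))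
  let w : Fin t → Fin n → ℝ := fun i => (bR i : Fin n → ℝ)
  -- the independent family
  let F : (Fin n ⊕ Unit) → (Sym (Fin t) 3 → ℝ) := fun j =>
    Sum.elim (fun u s => (s.1.map fun i => w i u).prod)
      (fun _ s => (s.1.map fun i => ∑ u, w i u).prod) j
  have hLI : LinearIndependent ℝ F := by
    rw [Fintype.linearIndependent_iff]
    intro g hg
    set c : Fin n → ℝ := fun u => g (Sum.inl u) with hc
    set c0 : ℝ := g (Sum.inr ()) with hc0
    -- the trilinear form
    let pr : Fin n → ((Fin n → ℝ) →ₗ[ℝ] ℝ) := fun u => LinearMap.proj u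
    let sm : (Fin n → ℝ) →ₗ[ℝ] ℝ := ∑ u, LinearMap.proj u
    let tri : ((Fin n → ℝ) →ₗ[ℝ] ℝ) → ((Fin n → ℝ) →ₗ[ℝ] ℝ) → ((Fin n → ℝ) →ₗ[ℝ] ℝ) →
        ((Fin n → ℝ) →ₗ[ℝ] ((Fin n → ℝ) →ₗ[ℝ] ((Fin n → ℝ) →ₗ[ℝ] ℝ))) :=
      fun f g' h => f.smulRight (g'.smulRight h)
    let T : (Fin n → ℝ) →ₗ[ℝ] ((Fin n → ℝ) →ₗ[ℝ] ((Fin n → ℝ) →ₗ[ℝ] ℝ)) :=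
      (∑ u, c u • tri (pr u) (pr u) (pr u)) + c0 • tri sm sm sm
    have T_apply : ∀ x y z : Fin n → ℝ,
        T x y z = (∑ u, c u * (x u * (y u * z u)))
          + c0 * ((∑ u, x u) * ((∑ u, y u) * (∑ u, z u))) := by
      intro x y z
      simp [T, tri, pr, sm, LinearMap.sum_apply, smul_eq_mul, mul_assoc]
    -- T vanishes on basis triples
    have hTb : ∀ i j k : Fin t, T (w i) (w j) (w k) = 0 := by
      intro i j k
      have hs : ((⟨{i, j, k}, rfl⟩ : Sym (Fin t) 3) : Sym (Fin t) 3) ∈ (Set.univ : Set (Sym (Fin t) 3)) := trivial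
      have := fun s : Sym (Fin t) 3 => congrFun hg s
      rw [T_apply]
      simp only [Fintype.sum_sum_type, Finset.univ_unique, Finset.sum_singleton,
        Pi.add_apply, Finset.sum_apply, Pi.smul_apply, smul_eq_mul, Pi.zero_apply, F,
        Sum.elim_inl, Sum.elim_inr] at this
      have := this ⟨{i, j, k}, rfl⟩
      simpa [Multiset.insert_eq_cons, mul_assoc] using this
    -- T vanishes on R
    have keyR : ∀ x ∈ R, ∀ y ∈ R, ∀ z ∈ R, T x y z = 0 := by
      intro x hx y hy z hz
      have hrep : ∀ v : R, (v : Fin n → ℝ) = ∑ i, bR.repr v i • w i := by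
        intro v
        conv_lhs => rw [← bR.sum_repr v]
        push_cast [Submodule.coe_sum]
        rfl
      rw [show x = ((⟨x, hx⟩ : R) : Fin n → ℝ) from rfl, hrep ⟨x, hx⟩,
        show y = ((⟨y, hy⟩ : R) : Fin n → ℝ) from rfl, hrep ⟨y, hy⟩,
        show z = ((⟨z, hz⟩ : R) : Fin n → ℝ) from rfl, hrep ⟨z, hz⟩]
      simp only [map_sum, _root_.map_smul, LinearMap.sum_apply, LinearMap.smul_apply, smul_eq_mul]
      simp [hTb]
    -- evaluations of T at concrete points of R
    have E1 : (∑ u, c u) + c0 * ((n:ℝ) * ((n:ℝ) * (n:ℝ))) = 0 := by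
      have h := keyR one memR_one one memR_one one memR_one
      rw [T_apply] at h
      simpa [hone] using h
    have E2 : ∀ v, (∑ u, c u * M u v) + c0 * (a * ((n:ℝ) * (n:ℝ))) = 0 := by
      intro v
      have h := keyR (col v) (memR_col v) one memR_one one memR_one
      rw [T_apply] at h
      simpa [hone, hcolv, hcol v] using h
    have E3 : ∀ v, (∑ u, c u * (M u v * (M u v * M u v))) + c0 * (a * (a * a)) = 0 := by
      intro v
      have h := keyR (col v) (memR_col v) (col v) (memR_col v) (col v) (memR_col v)
      rw [T_apply] at h
      simpa [hcolv, hcol v] using h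
    have E4 : ∀ v v', (∑ u, c u * (M u v * M u v')) + c0 * (a * (a * (n:ℝ))) = 0 := by
      intro v v'
      have h := keyR (col v) (memR_col v) (col v') (memR_col v') one memR_one
      rw [T_apply] at h
      simp only [hone, hcolv, mul_one] at h
      rw [hcol v, hcol v'] at h
      simpa using h
    -- cube reduction
    have hcube : ∀ v, ∑ u, c u * (M u v * (M u v * M u v))
        = (∑ u, c u * M u v) + c v * (μ - μ^3) := by
      intro v
      have h1 : ∑ u, (c u * (M u v * (M u v * M u v)) - c u * M u v) = c v * (μ - μ^3) := by
        rw [Finset.sum_eq_single v]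
        · rw [hdiagM]; ring
        · intro u _ huv
          rcases hoff u v huv with h | h | h <;> rw [h] <;> ring
        · simp
      rw [Finset.sum_sub_distrib] at h1
      linarith
    have hKv : ∀ v, c v * (μ - μ^3) = c0 * (a * ((n:ℝ)*(n:ℝ)) - a * (a * a)) := by
      intro v
      have h2 := E2 v
      have h3 := E3 v
      rw [hcube v] at h3
      linarith
    by_cases hc0 : c0 = 0
    · -- then all coefficients vanish
      have hcv : ∀ v, c v = 0 := by
        intro v
        have := hKv v
        rw [hc0] at this
        have h0 : c v * (μ - μ^3) = 0 := by linarith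
        exact (mul_eq_zero.1 h0).resolve_right hμ3
      intro i
      rcases i with u | u
      · exact hcv u
      · cases u; exact hc0
    · -- contradiction with the rank
      exfalso
      -- all c v are equal
      have hceq : ∀ v v', c v = c v' := by
        intro v v'
        have h1 := hKv v
        have h2 := hKv v'
        have : (c v - c v') * (μ - μ^3) = 0 := by linarith
        have := (mul_eq_zero.1 this).resolve_right hμ3
        linarith
      set v0 : Fin n := ⟨0, by omega⟩ with hv0
      have hsumc : (∑ u, c u) = (n:ℝ) * c v0 := by
        rw [Finset.sum_congr rfl fun u _ => hceq u v0]
        simp [mul_comm]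
      have hγ : c v0 = -(c0 * ((n:ℝ)*(n:ℝ))) := by
        have hnne : (n:ℝ) ≠ 0 := by
          have : (0:ℝ) < (n:ℝ) := by exact_mod_cast Nat.lt_of_lt_of_le (by norm_num) hn2
          linarith
        have h1 : (n:ℝ) * c v0 + c0 * ((n:ℝ) * ((n:ℝ) * (n:ℝ))) = 0 := by
          rw [← hsumc]; exact E1
        have h2 : (n:ℝ) * (c v0 + c0 * ((n:ℝ)*(n:ℝ))) = 0 := by linear_combination h1
        have h3 := (mul_eq_zero.1 h2).resolve_left hnne
        linarith
      -- pairwise column products are constant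
      have hP : ∀ v v', (n:ℝ) * (∑ u, M u v * M u v') = a * a := by
        intro v v'
        have h4 := E4 v v'
        have hsum : (∑ u, c u * (M u v * M u v')) = c v0 * ∑ u, M u v * M u v' := by
          rw [Finset.mul_sum]
          exact Finset.sum_congr rfl fun u _ => by rw [hceq u v0]
        rw [hsum, hγ] at h4
        have hc0' : c0 ≠ 0 := hc0
        have h5 : c0 * ((n:ℝ) * ((n:ℝ) * (∑ u, M u v * M u v') - a * a)) = 0 := by
          linear_combination -h4
        have hnne : (n:ℝ) ≠ 0 := by
          have : (0:ℝ) < (n:ℝ) := by exact_mod_cast Nat.lt_of_lt_of_le (by norm_num) hn2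
          linarith
        have h6 := (mul_eq_zero.1 h5).resolve_left hc0'
        have h7 := (mul_eq_zero.1 h6).resolve_left hnne
        linarith
      -- all columns are equal
      have hcols : ∀ u v, M u v = M u v0 := by
        intro u v
        have hnne : (n:ℝ) ≠ 0 := by
          have : (0:ℝ) < (n:ℝ) := by exact_mod_cast Nat.lt_of_lt_of_le (by norm_num) hn2
          linarith
        have e1 : ∑ u', (M u' v - M u' v0)^2
            = ((∑ u', M u' v * M u' v) - ∑ u', 2 * (M u' v * M u' v0)) + ∑ u', M u' v0 * M u' v0 := by
          rw [← Finset.sum_sub_distrib, ← Finset.sum_add_distrib]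
          exact Finset.sum_congr rfl fun u' _ => by ring
        have e2 : ∑ u', 2 * (M u' v * M u' v0) = 2 * ∑ u', M u' v * M u' v0 := by
          rw [Finset.mul_sum]
        have e3 : (n:ℝ) * ∑ u', (M u' v - M u' v0)^2 = 0 := by
          rw [e1, e2]
          have p1 := hP v v
          have p2 := hP v v0
          have p3 := hP v0 v0
          linear_combination p1 - 2 * p2 + p3
        have e4 : ∑ u', (M u' v - M u' v0)^2 = 0 := by
          rcases mul_eq_zero.1 e3 with h | h
          · exact absurd h hnne
          · exact h
        have e5 := (Finset.sum_eq_zero_iff_of_nonneg (fun u' _ => sq_nonneg _)).1 e4 u (Finset.mem_univ u)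
        have := pow_eq_zero_iff (n := 2) (by norm_num) |>.1 e5
        linarith
      -- hence R is contained in a line
      have hle : R ≤ Submodule.span ℝ {col v0} := by
        rintro y ⟨x, rfl⟩
        rw [Submodule.mem_span_singleton]
        refine ⟨∑ v, x v, ?_⟩
        funext u
        rw [Matrix.mulVecLin_apply]
        simp only [Pi.smul_apply, smul_eq_mul, hcolv, Matrix.mulVec, dotProduct]
        have hcongr : (∑ v, M u v * x v) = ∑ v, M u v0 * x v :=
          Finset.sum_congr rfl fun v _ => by rw [hcols u v]
        rw [hcongr, ← Finset.mul_sum]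
        ring
      have hfr : Module.finrank ℝ R ≤ 1 := by
        refine le_trans (Submodule.finrank_mono hle) ?_
        have h := finrank_span_le_card (R := ℝ) ({col v0} : Set (Fin n → ℝ))
        simpa using h
      rw [hrank] at hfr
      omega
  -- conclude
  have hcard := hLI.fintype_card_le_finrank
  rw [Module.finrank_pi ℝ] at hcard
  rw [Sym.card_sym_eq_choose] at hcard
  simpa using hcard

theorem switching_equivalent_net_regular_bound {n : ℕ}
    (A A' : Matrix (Fin n) (Fin n) ℝ)
    (hsymm : A.IsSymm)
    (hentries : ∀ p q, A p q ∈ ({0, 1, -1} : Set ℝ))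
    (hdiag : ∀ p, A p p = 0)
    (hsymm' : A'.IsSymm)
    (hentries' : ∀ p q, A' p q ∈ ({0, 1, -1} : Set ℝ))
    (hdiag' : ∀ p, A' p p = 0)
    (d : Fin n → ℝ) (hd : ∀ i, d i = 1 ∨ d i = -1)
    (hswitch : A' = Matrix.diagonal d * A * Matrix.diagonal d)
    (ϱ : ℝ) (hnetreg : ∀ i, (∑ j, A' i j) = ϱ)
    (μ : ℝ) (hμ : μ ∉ ({0, 1, -1, ϱ} : Set ℝ))
    (heig : Module.End.HasEigenvalue (Matrix.toLin' A) μ)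
    (k : ℕ) (hk : k = Module.finrank ℝ (Module.End.eigenspace (Matrix.toLin' A) μ))
    (t : ℕ) (ht : t = n - k) (ht2 : 2 ≤ t) :
    n ≤ (t + 2).choose 3 - 1 := by
  classical
  simp only [Set.mem_insert_iff, Set.mem_singleton_iff, not_or] at hμ
  obtain ⟨hμ0, hμ1, hμm1, hμϱ⟩ := hμ
  set De := Matrix.diagonal d with hDe
  have hDD : De * De = 1 := by
    rw [hDe, Matrix.diagonal_mul_diagonal]
    have hdd : (fun i => d i * d i) = fun _ => (1:ℝ) :=
      funext fun i => by rcases hd i with h | h <;> rw [h] <;> norm_num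
    rw [hdd]
    exact Matrix.diagonal_one
  set M : Matrix (Fin n) (Fin n) ℝ := A' - μ • 1 with hMdef
  have hMsymm : M.IsSymm := by
    rw [hMdef, Matrix.IsSymm, Matrix.transpose_sub, Matrix.transpose_smul,
      Matrix.transpose_one, hsymm']
  have hdiagM : ∀ v, M v v = -μ := by
    intro v
    simp [hMdef, Matrix.sub_apply, Matrix.one_apply_eq, hdiag' v]
  have hoffM : ∀ u v, u ≠ v → M u v = 0 ∨ M u v = 1 ∨ M u v = -1 := by
    intro u v huv
    have h := hentries' u v
    simp only [Set.mem_insert_iff, Set.mem_singleton_iff] at h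
    simpa [hMdef, Matrix.sub_apply, Matrix.one_apply_ne huv] using h
  have hrowM : ∀ u, ∑ v, M u v = ϱ - μ := by
    intro u
    simp only [hMdef, Matrix.sub_apply, Finset.sum_sub_distrib]
    rw [hnetreg u]
    congr 1
    have h1 : ∑ v, (1 : Matrix (Fin n) (Fin n) ℝ) u v = 1 := by
      simp [Matrix.one_apply]
    calc ∑ v, (μ • (1 : Matrix (Fin n) (Fin n) ℝ)) u v
        = μ * ∑ v, (1 : Matrix (Fin n) (Fin n) ℝ) u v := by
          rw [Finset.mul_sum]
          exact Finset.sum_congr rfl fun v _ => by simp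
      _ = μ := by rw [h1, mul_one]
  have haa : ϱ - μ ≠ 0 := sub_ne_zero.mpr (Ne.symm hμϱ)
  -- multiplicity transfer via the switching
  have hDlin : De.mulVecLin ∘ₗ De.mulVecLin = LinearMap.id := by
    rw [← Matrix.mulVecLin_mul, hDD, Matrix.mulVecLin_one]
  let e : (Fin n → ℝ) ≃ₗ[ℝ] (Fin n → ℝ) :=
    LinearEquiv.ofLinear De.mulVecLin De.mulVecLin hDlin hDlin
  have hA : De * A' * De = A := by
    rw [hswitch]
    simp only [← mul_assoc]
    rw [hDD, one_mul, mul_assoc, hDD, mul_one]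
  have hconj : ∀ x : Fin n → ℝ, A'.mulVec (De.mulVec x) = De.mulVec (A.mulVec x) := by
    intro x
    rw [Matrix.mulVec_mulVec, Matrix.mulVec_mulVec, hswitch,
      mul_assoc (De * A) De De, hDD, mul_one]
  have hconj' : ∀ x : Fin n → ℝ, A.mulVec (De.mulVec x) = De.mulVec (A'.mulVec x) := by
    intro x
    rw [Matrix.mulVec_mulVec, Matrix.mulVec_mulVec, ← hA,
      mul_assoc (De * A') De De, hDD, mul_one]
  have hmap : Submodule.map (↑e : (Fin n → ℝ) →ₗ[ℝ] (Fin n → ℝ))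
      (Module.End.eigenspace (Matrix.toLin' A) μ) = LinearMap.ker M.mulVecLin := by
    ext y
    simp only [Submodule.mem_map]
    constructor
    · rintro ⟨x, hx, rfl⟩
      rw [Module.End.mem_eigenspace_iff, Matrix.toLin'_apply] at hx
      rw [LinearMap.mem_ker]
      show M.mulVecLin (De.mulVec x) = 0
      rw [Matrix.mulVecLin_apply, hMdef, Matrix.sub_mulVec,
        Matrix.smul_mulVec, Matrix.one_mulVec, hconj, hx, Matrix.mulVec_smul]
      simp
    · intro hy
      rw [LinearMap.mem_ker, Matrix.mulVecLin_apply, hMdef, Matrix.sub_mulVec,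
        Matrix.smul_mulVec, Matrix.one_mulVec, sub_eq_zero] at hy
      refine ⟨De.mulVec y, ?_, ?_⟩
      · rw [Module.End.mem_eigenspace_iff, Matrix.toLin'_apply, hconj', hy,
          Matrix.mulVec_smul]
      · show De.mulVec (De.mulVec y) = y
        rw [Matrix.mulVec_mulVec, hDD, Matrix.one_mulVec]
  have hker : Module.finrank ℝ (LinearMap.ker M.mulVecLin) = k := by
    rw [← hmap, hk]
    exact LinearEquiv.finrank_map_eq e _
  have hrn := LinearMap.finrank_range_add_finrank_ker M.mulVecLin
  rw [hker] at hrn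
  have hfr : Module.finrank ℝ (Fin n → ℝ) = n := by simp
  rw [hfr] at hrn
  have hrange : Module.finrank ℝ (LinearMap.range M.mulVecLin) = t := by omega
  have hcore := sgn_core M hMsymm μ (ϱ - μ) hμ0 hμ1 hμm1 haa hdiagM hoffM hrowM hrange ht2
  omega
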